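/- In an n-vertex graph with a layered ℓ-separator, the intra-layer edges can be partitioned into at most ℓ · log₂ n stacks with respect to the ordering σ^s constructed recursively from the separator decomposition (alternating the direction in which components are listed within each layer). -/

import Mathlib

/-- `lay` is a layering of `G`: every edge joins vertices in the same layer
or in consecutive layers. -/
def IsLayering {V : Type*} (G : SimpleGraph V) (lay : V → ℕ) : Prop :=
  ∀ u v : V, G.Adj u v →
    lay u = lay v ∨ lay u + 1 = lay v ∨ lay v + 1 = lay u

/-- `G` has a layered `ℓ`-separator with respect to the layering `lay`: every
subgraph `G'` of `G` contains a set `S` with at most `ℓ` vertices in each layer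
such that every connected component of `G' − S` has at most `|V(G')| / 2`
vertices. -/
def HasLayeredSeparator {V : Type*} (G : SimpleGraph V) (lay : V → ℕ) (ℓ : ℕ) : Prop :=
  ∀ G' : G.Subgraph, ∃ S ⊆ G'.verts,
    (∀ i : ℕ, (S ∩ {v | lay v = i}).ncard ≤ ℓ) ∧
    ∀ c : ((G'.deleteVerts S).coe).ConnectedComponent,
      2 * c.supp.ncard ≤ G'.verts.ncard

/-- `G` has a stack layout with `s` stacks: an injective position function on
the vertices and an assignment of the edges to `s` stacks such that no two
edges in the same stack cross. -/
def HasStackLayout {V : Type*} (G : SimpleGraph V) (s : ℕ) : Prop :=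
  ∃ (pos : V → ℕ) (f : Sym2 V → ℕ), Function.Injective pos ∧
    (∀ v w : V, G.Adj v w → f s(v, w) < s) ∧
    (∀ v w x y : V, G.Adj v w → G.Adj x y → f s(v, w) = f s(x, y) →
      ¬ (pos v < pos x ∧ pos x < pos w ∧ pos w < pos y))

/-- `G` has a queue layout with `q` queues: an injective position function on
the vertices and an assignment of the edges to `q` queues such that no two
edges in the same queue nest. -/
def HasQueueLayout {V : Type*} (G : SimpleGraph V) (q : ℕ) : Prop :=
  ∃ (pos : V → ℕ) (f : Sym2 V → ℕ), Function.Injective pos ∧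
    (∀ v w : V, G.Adj v w → f s(v, w) < q) ∧
    (∀ v w x y : V, G.Adj v w → G.Adj x y → f s(v, w) = f s(x, y) →
      ¬ (pos v < pos x ∧ pos x < pos y ∧ pos y < pos w))

lemma ncard_rank_lt_self {V : Type*} [Fintype V] (T : Set V) (g : V → ℕ) {u : V} (hu : u ∈ T) :
    (T ∩ {w | g w < g u}).ncard < T.ncard := by
  refine Set.ncard_lt_ncard ?_ (Set.toFinite _)
  refine (Set.ssubset_iff_of_subset Set.inter_subset_left).2 ⟨u, hu, ?_⟩
  intro h
  exact lt_irrefl (g u) h.2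

lemma ncard_rank_lt {V : Type*} [Fintype V] (T : Set V) (g : V → ℕ) {u v : V}
    (hu : u ∈ T) (huv : g u < g v) :
    (T ∩ {w | g w < g u}).ncard < (T ∩ {w | g w < g v}).ncard := by
  refine Set.ncard_lt_ncard ?_ (Set.toFinite _)
  refine (Set.ssubset_iff_of_subset ?_).2 ⟨u, ⟨hu, huv⟩, ?_⟩
  · rintro w ⟨hw1, hw2⟩
    exact ⟨hw1, lt_trans hw2 huv⟩
  · intro h
    exact lt_irrefl (g u) h.2

lemma il_aux {V : Type*} [Fintype V] (G : SimpleGraph V) (ℓ : ℕ) (lay : V → ℕ)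
    (hsep : HasLayeredSeparator G lay ℓ) :
    ∀ n (A : Set V), A.ncard ≤ n → ∃ (p : V → ℚ) (f : Sym2 V → ℕ),
      (∀ v ∈ A, 0 ≤ p v ∧ p v < 1) ∧
      (∀ u ∈ A, ∀ v ∈ A, lay u = lay v → p u = p v → u = v) ∧
      (∀ v w : V, v ∈ A → w ∈ A → G.Adj v w → lay v = lay w →
        f s(v, w) < ℓ * Nat.log 2 n) ∧
      (∀ v w x y : V, v ∈ A → w ∈ A → x ∈ A → y ∈ A → G.Adj v w → G.Adj x y →
        lay v = lay w → lay x = lay y → lay v = lay x → f s(v, w) = f s(x, y) →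
        ¬ (p v < p x ∧ p x < p w ∧ p w < p y)) := by
  classical
  intro n
  induction n using Nat.strong_induction_on with
  | _ n IH =>
  intro A hA
  by_cases hn : n ≤ 1
  · refine ⟨fun _ => 0, fun _ => 0, fun v _ => ⟨le_refl 0, one_pos⟩, ?_, ?_, ?_⟩
    · intro u hu v hv _ _
      by_contra hne
      have h2 : 1 < A.ncard := (Set.one_lt_ncard (Set.toFinite A)).2 ⟨u, hu, v, hv, hne⟩
      omega
    · intro v w hv hw hadj _
      exfalso
      have h2 : 1 < A.ncard := (Set.one_lt_ncard (Set.toFinite A)).2 ⟨v, hv, w, hw, hadj.ne⟩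
      omega
    · intro v w x y _ _ _ _ _ _ _ _ _ _ h
      exact absurd h.1 (lt_irrefl 0)
  push_neg at hn
  -- apply the separator hypothesis to the induced subgraph on A
  obtain ⟨S, hSA, hSl, hScomp⟩ := hsep ((⊤ : G.Subgraph).induce A)
  rw [SimpleGraph.Subgraph.induce_verts] at hSA
  set Γ := ((⊤ : G.Subgraph).induce A).deleteVerts S with hΓ
  have hΓverts : Γ.verts = A \ S := by
    rw [hΓ, SimpleGraph.Subgraph.deleteVerts_verts, SimpleGraph.Subgraph.induce_verts]
  set cSupp : Γ.coe.ConnectedComponent → Set V := fun c => Subtype.val '' c.supp with hcSupp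
  have hΓmem : ∀ v : V, v ∈ Γ.verts ↔ v ∈ A \ S := fun v => by rw [hΓverts]
  have hcSub : ∀ c, cSupp c ⊆ A \ S := by
    intro c v hv
    obtain ⟨x, _, rfl⟩ := hv
    exact (hΓmem _).1 x.2
  have hunique : ∀ {c c' : Γ.coe.ConnectedComponent} {v : V},
      v ∈ cSupp c → v ∈ cSupp c' → c = c' := by
    rintro c c' v ⟨x, hx, rfl⟩ ⟨y, hy, hxy⟩
    have hxy' : y = x := Subtype.ext hxy
    subst hxy'
    rw [SimpleGraph.ConnectedComponent.mem_supp_iff] at hx hy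
    rw [← hx, ← hy]
  have hmemc : ∀ v (hv : v ∈ Γ.verts), v ∈ cSupp (Γ.coe.connectedComponentMk ⟨v, hv⟩) := by
    intro v hv
    exact ⟨⟨v, hv⟩, by rw [SimpleGraph.ConnectedComponent.mem_supp_iff], rfl⟩
  have hadj_same : ∀ v w, v ∈ A → w ∈ A → v ∉ S → w ∉ S → G.Adj v w →
      ∃ c, v ∈ cSupp c ∧ w ∈ cSupp c := by
    intro v w hvA hwA hvS hwS hadj
    have hv' : v ∈ Γ.verts := by rw [hΓverts]; exact ⟨hvA, hvS⟩
    have hw' : w ∈ Γ.verts := by rw [hΓverts]; exact ⟨hwA, hwS⟩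
    have hadjΓ0 : Γ.Adj v w := by
      rw [hΓ, SimpleGraph.Subgraph.deleteVerts_adj]
      refine ⟨by simpa using hvA, hvS, by simpa using hwA, hwS, ?_⟩
      rw [SimpleGraph.Subgraph.induce_adj]
      exact ⟨hvA, hwA, by rwa [SimpleGraph.Subgraph.top_adj]⟩
    have hadjΓ : Γ.coe.Adj ⟨v, hv'⟩ ⟨w, hw'⟩ := by
      rw [SimpleGraph.Subgraph.coe_adj]
      exact hadjΓ0
    refine ⟨Γ.coe.connectedComponentMk ⟨v, hv'⟩, hmemc v hv', ?_⟩
    refine ⟨⟨w, hw'⟩, ?_, rfl⟩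
    rw [SimpleGraph.ConnectedComponent.mem_supp_iff]
    exact SimpleGraph.ConnectedComponent.sound hadjΓ.reachable.symm
  -- sizes of components
  have hcn : ∀ c, (cSupp c).ncard ≤ n / 2 := by
    intro c
    have h1 := hScomp c
    have hAv : (((⊤ : G.Subgraph).induce A).verts).ncard = A.ncard := by
      rw [SimpleGraph.Subgraph.induce_verts]
    have h2 : (cSupp c).ncard = c.supp.ncard :=
      Set.ncard_image_of_injective _ Subtype.val_injective
    rw [Nat.le_div_iff_mul_le (by norm_num : 0 < 2)]
    omega
  have hCex : ∀ c : Γ.coe.ConnectedComponent, ∃ (p : V → ℚ) (f : Sym2 V → ℕ),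
      (∀ v ∈ cSupp c, 0 ≤ p v ∧ p v < 1) ∧
      (∀ u ∈ cSupp c, ∀ v ∈ cSupp c, lay u = lay v → p u = p v → u = v) ∧
      (∀ v w : V, v ∈ cSupp c → w ∈ cSupp c → G.Adj v w → lay v = lay w →
        f s(v, w) < ℓ * Nat.log 2 (n / 2)) ∧
      (∀ v w x y : V, v ∈ cSupp c → w ∈ cSupp c → x ∈ cSupp c → y ∈ cSupp c →
        G.Adj v w → G.Adj x y →
        lay v = lay w → lay x = lay y → lay v = lay x → f s(v, w) = f s(x, y) →
        ¬ (p v < p x ∧ p x < p w ∧ p w < p y)) :=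
    fun c => IH (n / 2) (Nat.div_lt_self (by omega) one_lt_two) (cSupp c) (hcn c)
  choose pC fC hC1 hC2 hC3 hC4 using hCex
  -- ranks and indices
  set N := Fintype.card V with hN
  set rk : V → ℕ := fun v => (Fintype.equivFin V v).val with hrk_def
  have hrk : Function.Injective rk := fun a b h =>
    (Fintype.equivFin V).injective (Fin.val_injective h)
  have hrklt : ∀ v, rk v < N := fun v => (Fintype.equivFin V v).2
  set idx : V → ℕ :=
    fun v => ((S ∩ {u | lay u = lay v}) ∩ {u | rk u < rk v}).ncard with hidx_def
  have hidx_lt : ∀ v ∈ S, idx v < ℓ := by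
    intro v hv
    calc idx v < (S ∩ {u | lay u = lay v}).ncard :=
          ncard_rank_lt_self _ rk ⟨hv, rfl⟩
      _ ≤ ℓ := hSl (lay v)
  have hidx_le : ∀ v, idx v ≤ N := by
    intro v
    have := Set.ncard_le_ncard (Set.subset_univ ((S ∩ {u | lay u = lay v}) ∩ {u | rk u < rk v}))
      (Set.toFinite _)
    rwa [Set.ncard_univ, Nat.card_eq_fintype_card] at this
  have hidx_inj : ∀ u1 u2, u1 ∈ S → u2 ∈ S → lay u1 = lay u2 → idx u1 = idx u2 → u1 = u2 := by
    intro u1 u2 h1 h2 hl he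
    by_contra hne
    have hset : {u : V | lay u = lay u2} = {u | lay u = lay u1} := by
      ext w; simp only [Set.mem_setOf_eq, hl]
    have he1 : idx u1 = ((S ∩ {u | lay u = lay u1}) ∩ {u | rk u < rk u1}).ncard := by
      simp only [hidx_def]
    have he2 : idx u2 = ((S ∩ {u | lay u = lay u1}) ∩ {u | rk u < rk u2}).ncard := by
      simp only [hidx_def, hset]
    rcases lt_trichotomy (rk u1) (rk u2) with h | h | h
    · have hlt := ncard_rank_lt (S ∩ {u | lay u = lay u1}) rk (u := u1) (v := u2) ⟨h1, rfl⟩ h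
      omega
    · exact hne (hrk h)
    · have hlt := ncard_rank_lt (S ∩ {u | lay u = lay u1}) rk (u := u2) (v := u1) ⟨h2, hl.symm⟩ h
      omega
  set cIdx : Γ.coe.ConnectedComponent → ℕ :=
    fun c => rk (↑(Classical.choose c.exists_rep)) with hcIdx_def
  have hcIdx_lt : ∀ c, cIdx c < N := fun c => hrklt _
  have hcIdx_inj : Function.Injective cIdx := by
    intro c c' h
    simp only [hcIdx_def] at h
    have h1 := Classical.choose_spec c.exists_rep
    have h2 := Classical.choose_spec c'.exists_rep
    have h3 : Classical.choose c.exists_rep = Classical.choose c'.exists_rep :=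
      Subtype.ext (hrk h)
    rw [← h1, ← h2, h3]
  set D : ℚ := 2 * N + 2 with hD_def
  have hD : (0 : ℚ) < D := by rw [hD_def]; positivity
  set p : V → ℚ := fun v =>
    if v ∈ S then (2 * idx v : ℚ) / D
    else if h : ∃ c, v ∈ cSupp c then (2 * cIdx h.choose + 1 + pC h.choose v) / D
    else 0 with hp_def
  set f : Sym2 V → ℕ := fun e =>
    if h1 : ∃ u ∈ S, u ∈ e then idx h1.choose
    else if h2 : ∃ c, ∃ u ∈ cSupp c, u ∈ e then ℓ + fC h2.choose e
    else 0 with hf_def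
  -- characterizations
  have hpS : ∀ v ∈ S, p v = (2 * idx v : ℚ) / D := by
    intro v hv
    rw [hp_def]
    simp only [if_pos hv]
  have hpc : ∀ c v, v ∈ cSupp c → p v = (2 * cIdx c + 1 + pC c v) / D := by
    intro c v hv
    have hvS : v ∉ S := (hcSub c hv).2
    have hex : ∃ c', v ∈ cSupp c' := ⟨c, hv⟩
    have hch : hex.choose = c := hunique hex.choose_spec hv
    rw [hp_def]
    simp only [if_neg hvS, dif_pos hex, hch]
  have hf_memS : ∀ v w : V, (v ∈ S ∨ w ∈ S) →
      ∃ u, (u = v ∨ u = w) ∧ u ∈ S ∧ f s(v, w) = idx u := by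
    intro v w hvw
    have h1 : ∃ u ∈ S, u ∈ (s(v, w) : Sym2 V) := by
      rcases hvw with h | h
      · exact ⟨v, h, by simp⟩
      · exact ⟨w, h, by simp⟩
    refine ⟨h1.choose, ?_, h1.choose_spec.1, ?_⟩
    · have := h1.choose_spec.2
      rwa [Sym2.mem_iff] at this
    · rw [hf_def]
      simp only [dif_pos h1]
  have hf_comp : ∀ (c : Γ.coe.ConnectedComponent) (v w : V),
      v ∈ cSupp c → w ∈ cSupp c → f s(v, w) = ℓ + fC c s(v, w) := by
    intro c v w hv hw
    have hvS : v ∉ S := (hcSub c hv).2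
    have hwS : w ∉ S := (hcSub c hw).2
    have h1 : ¬ ∃ u ∈ S, u ∈ (s(v, w) : Sym2 V) := by
      rintro ⟨u, huS, hue⟩
      rw [Sym2.mem_iff] at hue
      rcases hue with rfl | rfl
      · exact hvS huS
      · exact hwS huS
    have h2 : ∃ c', ∃ u ∈ cSupp c', u ∈ (s(v, w) : Sym2 V) := ⟨c, v, hv, by simp⟩
    have hch : h2.choose = c := by
      obtain ⟨u, hu1, hu2⟩ := h2.choose_spec
      rw [Sym2.mem_iff] at hu2
      rcases hu2 with rfl | rfl
      · exact hunique hu1 hv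
      · exact hunique hu1 hw
    rw [hf_def]
    simp only [dif_neg h1, dif_pos h2, hch]
  have hdivlt : ∀ a b : ℚ, a / D < b / D ↔ a < b :=
    fun a b => div_lt_div_iff_of_pos_right hD
  have hlogpos : 0 < Nat.log 2 n := Nat.log_pos one_lt_two hn
  have hlogrec : Nat.log 2 (n / 2) + 1 = Nat.log 2 n := by
    have := Nat.log_div_base 2 n
    omega
  have hdiveq : ∀ a b : ℚ, a / D = b / D → a = b := by
    intro a b hh
    rwa [div_eq_div_iff hD.ne' hD.ne', mul_left_inj' hD.ne'] at hh
  have hcomp_of : ∀ v, v ∈ A → v ∉ S → ∃ c, v ∈ cSupp c := by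
    intro v hvA hvS
    have hv' : v ∈ Γ.verts := (hΓmem v).2 ⟨hvA, hvS⟩
    exact ⟨_, hmemc v hv'⟩
  refine ⟨p, f, ?_, ?_, ?_, ?_⟩
  · -- bounds
    intro v hv
    by_cases hvS : v ∈ S
    · rw [hpS v hvS]
      have h1 : (idx v : ℚ) ≤ N := by exact_mod_cast hidx_le v
      constructor
      · positivity
      · rw [div_lt_one hD, hD_def]
        linarith
    · obtain ⟨c, hvc⟩ := hcomp_of v hv hvS
      rw [hpc c v hvc]
      obtain ⟨ht0, ht1⟩ := hC1 c v hvc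
      have hb : (cIdx c : ℚ) + 1 ≤ N := by exact_mod_cast hcIdx_lt c
      constructor
      · apply div_nonneg _ hD.le
        positivity
      · rw [div_lt_one hD, hD_def]
        linarith
  · -- injectivity within layers
    intro u hu v hv hl he
    by_cases huS : u ∈ S <;> by_cases hvS : v ∈ S
    · rw [hpS u huS, hpS v hvS] at he
      have h2 : (2 * (idx u : ℚ)) = 2 * idx v := hdiveq _ _ he
      have h3 : idx u = idx v := by exact_mod_cast (by linarith : (idx u : ℚ) = idx v)
      exact hidx_inj u v huS hvS hl h3
    · obtain ⟨c, hvc⟩ := hcomp_of v hv hvS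
      rw [hpS u huS, hpc c v hvc] at he
      have h2 := hdiveq _ _ he
      obtain ⟨ht0, ht1⟩ := hC1 c v hvc
      exfalso
      rcases le_or_gt (idx u) (cIdx c) with h | h
      · have : (idx u : ℚ) ≤ cIdx c := by exact_mod_cast h
        linarith
      · have : (cIdx c : ℚ) + 1 ≤ idx u := by exact_mod_cast h
        linarith
    · obtain ⟨c, huc⟩ := hcomp_of u hu huS
      rw [hpc c u huc, hpS v hvS] at he
      have h2 := hdiveq _ _ he
      obtain ⟨ht0, ht1⟩ := hC1 c u huc
      exfalso
      rcases le_or_gt (idx v) (cIdx c) with h | h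
      · have : (idx v : ℚ) ≤ cIdx c := by exact_mod_cast h
        linarith
      · have : (cIdx c : ℚ) + 1 ≤ idx v := by exact_mod_cast h
        linarith
    · obtain ⟨c, huc⟩ := hcomp_of u hu huS
      obtain ⟨c', hvc⟩ := hcomp_of v hv hvS
      rw [hpc c u huc, hpc c' v hvc] at he
      have h2 := hdiveq _ _ he
      by_cases hcc : c = c'
      · subst hcc
        have h3 : pC c u = pC c v := by linarith
        exact hC2 c u huc v hvc hl h3
      · exfalso
        obtain ⟨ht0, ht1⟩ := hC1 c u huc
        obtain ⟨hs0, hs1⟩ := hC1 c' v hvc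
        have hbne : cIdx c ≠ cIdx c' := fun hh => hcc (hcIdx_inj hh)
        rcases lt_or_gt_of_ne hbne with h | h
        · have : (cIdx c : ℚ) + 1 ≤ cIdx c' := by exact_mod_cast h
          linarith
        · have : (cIdx c' : ℚ) + 1 ≤ cIdx c := by exact_mod_cast h
          linarith
  · -- stack bound
    intro v w hvA hwA hadj hlw
    by_cases hm : v ∈ S ∨ w ∈ S
    · obtain ⟨u, _, huS, hfe⟩ := hf_memS v w hm
      rw [hfe]
      have h1 : idx u < ℓ := hidx_lt u huS
      have h2 : ℓ ≤ ℓ * Nat.log 2 n := Nat.le_mul_of_pos_right ℓ hlogpos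
      omega
    · push_neg at hm
      obtain ⟨c, hvc, hwc⟩ := hadj_same v w hvA hwA hm.1 hm.2 hadj
      rw [hf_comp c v w hvc hwc]
      have h3 := hC3 c v w hvc hwc hadj hlw
      calc ℓ + fC c s(v, w) < ℓ + ℓ * Nat.log 2 (n / 2) := Nat.add_lt_add_left h3 ℓ
        _ = ℓ * (Nat.log 2 (n / 2) + 1) := by ring
        _ = ℓ * Nat.log 2 n := by rw [hlogrec]
  · -- no crossing
    rintro v w x y hvA hwA hxA hyA ha1 ha2 hl1 hl2 hl3 hfe ⟨hc1, hc2, hc3⟩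
    have hne : ∀ {a b : V}, p a < p b → a ≠ b := by
      intro a b h hab
      rw [hab] at h
      exact lt_irrefl _ h
    have hvx : v ≠ x := hne hc1
    have hvy : v ≠ y := hne (hc1.trans (hc2.trans hc3))
    have hxw : x ≠ w := hne hc2
    have hwy : w ≠ y := hne hc3
    by_cases hm1 : v ∈ S ∨ w ∈ S
    · by_cases hm2 : x ∈ S ∨ y ∈ S
      · obtain ⟨u1, hu1or, hu1S, hfe1⟩ := hf_memS v w hm1
        obtain ⟨u2, hu2or, hu2S, hfe2⟩ := hf_memS x y hm2
        rw [hfe1, hfe2] at hfe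
        have hlu : lay u1 = lay u2 := by
          rcases hu1or with rfl | rfl <;> rcases hu2or with rfl | rfl <;> omega
        have h12 : u1 = u2 := hidx_inj u1 u2 hu1S hu2S hlu hfe
        rcases hu1or with rfl | rfl <;> rcases hu2or with rfl | rfl <;>
          first
          | exact hvx h12
          | exact hvy h12
          | exact hxw h12.symm
          | exact hwy h12
      · push_neg at hm2
        obtain ⟨u1, _, hu1S, hfe1⟩ := hf_memS v w hm1
        obtain ⟨c2, hxc, hyc⟩ := hadj_same x y hxA hyA hm2.1 hm2.2 ha2
        rw [hfe1, hf_comp c2 x y hxc hyc] at hfe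
        have h1 : idx u1 < ℓ := hidx_lt u1 hu1S
        omega
    · by_cases hm2 : x ∈ S ∨ y ∈ S
      · push_neg at hm1
        obtain ⟨u2, _, hu2S, hfe2⟩ := hf_memS x y hm2
        obtain ⟨c1, hvc, hwc⟩ := hadj_same v w hvA hwA hm1.1 hm1.2 ha1
        rw [hfe2, hf_comp c1 v w hvc hwc] at hfe
        have h1 : idx u2 < ℓ := hidx_lt u2 hu2S
        omega
      · push_neg at hm1
        push_neg at hm2
        obtain ⟨c1, hvc, hwc⟩ := hadj_same v w hvA hwA hm1.1 hm1.2 ha1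
        obtain ⟨c2, hxc, hyc⟩ := hadj_same x y hxA hyA hm2.1 hm2.2 ha2
        rw [hf_comp c1 v w hvc hwc, hf_comp c2 x y hxc hyc] at hfe
        have hfc : fC c1 s(v, w) = fC c2 s(x, y) := by omega
        rw [hpc c1 v hvc, hpc c2 x hxc, hdivlt] at hc1
        rw [hpc c2 x hxc, hpc c1 w hwc, hdivlt] at hc2
        rw [hpc c1 w hwc, hpc c2 y hyc, hdivlt] at hc3
        by_cases hcc : c1 = c2
        · subst hcc
          refine hC4 c1 v w x y hvc hwc hxc hyc ha1 ha2 hl1 hl2 hl3 hfc ⟨?_, ?_, ?_⟩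
          · linarith
          · linarith
          · linarith
        · obtain ⟨ht0v, ht1v⟩ := hC1 c1 v hvc
          obtain ⟨ht0w, ht1w⟩ := hC1 c1 w hwc
          obtain ⟨ht0x, ht1x⟩ := hC1 c2 x hxc
          obtain ⟨ht0y, ht1y⟩ := hC1 c2 y hyc
          have hbne : cIdx c1 ≠ cIdx c2 := fun hh => hcc (hcIdx_inj hh)
          rcases lt_or_gt_of_ne hbne with h | h
          · have : (cIdx c1 : ℚ) + 1 ≤ cIdx c2 := by exact_mod_cast h
            linarith
          · have : (cIdx c2 : ℚ) + 1 ≤ cIdx c1 := by exact_mod_cast h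
            linarith

lemma rank_order {V : Type*} [Fintype V] {α : Type*} [LinearOrder α] (g : V → α) :
    ∃ pos : V → ℕ, (∀ u v, g u < g v ↔ pos u < pos v) ∧
      (Function.Injective g → Function.Injective pos) := by
  classical
  have fwd : ∀ u v : V, g u < g v →
      (Finset.univ.filter fun w => g w < g u).card <
      (Finset.univ.filter fun w => g w < g v).card := by
    intro u v huv
    apply Finset.card_lt_card
    constructor
    · intro w hw
      simp only [Finset.mem_filter, Finset.mem_univ, true_and] at hw ⊢
      exact hw.trans huv
    · intro hsub
      have : u ∈ Finset.univ.filter fun w => g w < g u := by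
        apply hsub
        simp only [Finset.mem_filter, Finset.mem_univ, true_and]
        exact huv
      simp only [Finset.mem_filter] at this
      exact lt_irrefl _ this.2
  refine ⟨fun v => (Finset.univ.filter fun u => g u < g v).card, ?_, ?_⟩
  · intro u v
    constructor
    · intro h
      have := fwd u v h
      dsimp only
      omega
    · intro h
      dsimp only at h
      by_contra hle
      push_neg at hle
      rcases lt_or_eq_of_le hle with h2 | h2
      · have := fwd v u h2
        omega
      · rw [h2] at h
        exact lt_irrefl _ h
  · intro hg u v huv
    dsimp only at huv
    rcases lt_trichotomy (g u) (g v) with h | h | h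
    · have := fwd u v h
      omega
    · exact hg h
    · have := fwd v u h
      omega

/-- In an `n`-vertex graph with a layered `ℓ`-separator, the intra-layer edges
can be partitioned into at most `ℓ · log₂ n` stacks with respect to a
layer-by-layer vertex ordering. -/
theorem intra_layer_stacks {V : Type*} [Fintype V]
    (G : SimpleGraph V) (ℓ : ℕ) (lay : V → ℕ)
    (hlay : IsLayering G lay) (hsep : HasLayeredSeparator G lay ℓ) :
    ∃ (pos : V → ℕ) (f : Sym2 V → ℕ) (s : ℕ), Function.Injective pos ∧
      (∀ u v : V, lay u < lay v → pos u < pos v) ∧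
      (s : ℝ) ≤ ℓ * Real.logb 2 (Fintype.card V) ∧
      (∀ v w : V, G.Adj v w → lay v = lay w → f s(v, w) < s) ∧
      (∀ v w x y : V, G.Adj v w → G.Adj x y → lay v = lay w → lay x = lay y →
        f s(v, w) = f s(x, y) →
        ¬ (pos v < pos x ∧ pos x < pos w ∧ pos w < pos y)) := by
  classical
  obtain ⟨p, f, _, hinj, hflt, hcross⟩ := il_aux G ℓ lay hsep (Fintype.card V) Set.univ
    (by rw [Set.ncard_univ, Nat.card_eq_fintype_card])
  set key : V → ℕ ×ₗ ℚ := fun v => toLex (lay v, p v) with hkey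
  have hkeyinj : Function.Injective key := by
    intro u v h
    simp only [hkey, toLex_inj, Prod.mk.injEq] at h
    exact hinj u (Set.mem_univ u) v (Set.mem_univ v) h.1 h.2
  obtain ⟨pos, hposiff, hposinj⟩ := rank_order key
  have hkeylt : ∀ u v : V, key u < key v ↔
      lay u < lay v ∨ lay u = lay v ∧ p u < p v := fun u v => Prod.Lex.lt_iff
  refine ⟨pos, f, ℓ * Nat.log 2 (Fintype.card V), hposinj hkeyinj, ?_, ?_, ?_, ?_⟩
  · intro u v h
    exact (hposiff u v).1 ((hkeylt u v).2 (Or.inl h))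
  · push_cast
    have h1 : (Nat.log 2 (Fintype.card V) : ℝ) ≤ Real.logb 2 (Fintype.card V) :=
      Real.natLog_le_logb _ _
    have h2 : (0 : ℝ) ≤ ℓ := Nat.cast_nonneg ℓ
    nlinarith
  · intro v w hadj hlw
    exact hflt v w (Set.mem_univ v) (Set.mem_univ w) hadj hlw
  · rintro v w x y ha1 ha2 hl1 hl2 hfe ⟨hc1, hc2, hc3⟩
    rw [← hposiff] at hc1 hc2 hc3
    rw [hkeylt] at hc1 hc2 hc3
    have hl3 : lay v = lay x := by
      rcases hc1 with h | h
      · rcases hc2 with h' | h' <;> omega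
      · exact h.1
    have hlvw : lay v = lay w := hl1
    have hlxy : lay x = lay y := hl2
    have hp1 : p v < p x := by
      rcases hc1 with h | h
      · exact absurd h (by omega)
      · exact h.2
    have hp2 : p x < p w := by
      rcases hc2 with h | h
      · exact absurd h (by omega)
      · exact h.2
    have hp3 : p w < p y := by
      rcases hc3 with h | h
      · exact absurd h (by omega)
      · exact h.2
    exact hcross v w x y (Set.mem_univ v) (Set.mem_univ w) (Set.mem_univ x) (Set.mem_univ y)
      ha1 ha2 hl1 hl2 hl3 hfe ⟨hp1, hp2, hp3⟩
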